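/- The inversion identity: for any sequences related by b_n = Σ_{k=0}^{n} C(n,k) (1-λ)_{n-k,λ} a_k for all n, one has a_n = Σ_{k=0}^{n} C(n,k) (-1)^{n-k} ⟨1-λ⟩_{n-k,λ} b_k for all n. -/

import Mathlib

/-- The degenerate falling factorial `(x)_{n,λ} = x(x-λ)(x-2λ)⋯(x-(n-1)λ)`. -/
def degFall (l x : ℝ) : ℕ → ℝ
  | 0 => 1
  | n + 1 => degFall l x n * (x - n * l)

/-- The degenerate rising factorial `⟨x⟩_{n,λ} = x(x+λ)(x+2λ)⋯(x+(n-1)λ)`. -/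
def degRise (l x : ℝ) : ℕ → ℝ
  | 0 => 1
  | n + 1 => degRise l x n * (x + n * l)

/-- The degenerate exponential `e_λ^x(t) = Σ (x)_{n,λ} tⁿ/n!` as a formal power series. -/
noncomputable def degExp (l x : ℝ) : PowerSeries ℝ :=
  PowerSeries.mk fun n => degFall l x n / n.factorial

lemma neg_one_pow_degRise (l x : ℝ) : ∀ m, (-1 : ℝ) ^ m * degRise l x m = degFall l (-x) m
  | 0 => by simp [degRise, degFall]
  | m + 1 => by
    rw [degRise, degFall, ← neg_one_pow_degRise l x m]
    ring

lemma degFall_zero (l : ℝ) : ∀ d, degFall l 0 d = if d = 0 then 1 else 0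
  | 0 => by simp [degFall]
  | 1 => by simp [degFall]
  | d + 2 => by
    rw [degFall, degFall_zero l (d + 1)]
    simp

lemma deg_vandermonde (l x y : ℝ) : ∀ d : ℕ,
    ∑ j ∈ Finset.range (d + 1),
      (d.choose j : ℝ) * degFall l x j * degFall l y (d - j) = degFall l (x + y) d
  | 0 => by simp [degFall]
  | d + 1 => by
    have h1 : ∑ j ∈ Finset.range (d + 2),
        ((d + 1).choose j : ℝ) * degFall l x j * degFall l y (d + 1 - j)
        = (∑ j ∈ Finset.range (d + 1),
            (d.choose j : ℝ) * degFall l x (j + 1) * degFall l y (d - j))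
          + ∑ j ∈ Finset.range (d + 1),
            (d.choose j : ℝ) * degFall l x j * degFall l y (d + 1 - j) := by
      rw [Finset.sum_range_succ' (fun j => ((d + 1).choose j : ℝ) * degFall l x j
        * degFall l y (d + 1 - j))]
      rw [Finset.sum_range_succ' (fun j => (d.choose j : ℝ) * degFall l x j
        * degFall l y (d + 1 - j))]
      have : ∀ j ∈ Finset.range (d + 1),
          ((d + 1).choose (j + 1) : ℝ) * degFall l x (j + 1) * degFall l y (d + 1 - (j + 1))
          = (d.choose j : ℝ) * degFall l x (j + 1) * degFall l y (d - j)
            + (d.choose (j + 1) : ℝ) * degFall l x (j + 1) * degFall l y (d + 1 - (j + 1)) := by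
        intro j hj
        rw [Nat.choose_succ_succ]
        push_cast
        ring
      rw [Finset.sum_congr rfl this, Finset.sum_add_distrib]
      rw [Finset.sum_range_succ (f := fun j => (d.choose (j + 1) : ℝ) * degFall l x (j + 1)
        * degFall l y (d + 1 - (j + 1)))]
      simp [Nat.choose_succ_self]
      ring
    rw [h1]
    rw [← Finset.sum_add_distrib]
    have h2 : ∀ j ∈ Finset.range (d + 1),
        (d.choose j : ℝ) * degFall l x (j + 1) * degFall l y (d - j)
          + (d.choose j : ℝ) * degFall l x j * degFall l y (d + 1 - j)
        = ((d.choose j : ℝ) * degFall l x j * degFall l y (d - j)) * (x + y - d * l) := by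
      intro j hj
      rw [Finset.mem_range] at hj
      have hj' : j ≤ d := by omega
      have hd : d + 1 - j = (d - j) + 1 := by omega
      rw [hd, degFall, degFall]
      have : ((d : ℝ) - j) = ((d - j : ℕ) : ℝ) := by
        push_cast [hj']; ring
      push_cast [hj']
      ring
    rw [Finset.sum_congr rfl h2, ← Finset.sum_mul, deg_vandermonde l x y d, degFall]

lemma deg_orth (l : ℝ) (d : ℕ) :
    ∑ m ∈ Finset.range (d + 1),
      (d.choose m : ℝ) * (-1) ^ (d - m) * degRise l (1 - l) (d - m) * degFall l (1 - l) m
    = if d = 0 then 1 else 0 := by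
  have e : ∀ m ∈ Finset.range (d + 1),
      (d.choose m : ℝ) * (-1) ^ (d - m) * degRise l (1 - l) (d - m) * degFall l (1 - l) m
      = (d.choose m : ℝ) * degFall l (1 - l) m * degFall l (-(1 - l)) (d - m) := by
    intro m _
    rw [← neg_one_pow_degRise l (1 - l) (d - m)]
    ring
  rw [Finset.sum_congr rfl e, deg_vandermonde]
  have : (1 - l) + -(1 - l) = 0 := by ring
  rw [this, degFall_zero]

theorem deg_binomial_inversion (l : ℝ) (a b : ℕ → ℝ)
    (h : ∀ n : ℕ, b n = ∑ k ∈ Finset.range (n + 1),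
        (n.choose k : ℝ) * degFall l (1 - l) (n - k) * a k) (n : ℕ) :
    a n = ∑ k ∈ Finset.range (n + 1),
      (n.choose k : ℝ) * (-1) ^ (n - k) * degRise l (1 - l) (n - k) * b k := by
  symm
  simp only [h, Finset.mul_sum, Finset.range_eq_Ico]
  rw [← Finset.sum_Ico_Ico_comm]
  trans (∑ j ∈ Finset.Ico 0 (n + 1),
      a j * (n.choose j : ℝ) * (if n - j = 0 then (1 : ℝ) else 0))
  · refine Finset.sum_congr rfl fun j hj => ?_
    simp only [Finset.mem_Ico] at hj
    rw [Finset.sum_Ico_eq_sum_range]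
    have hnj : n + 1 - j = (n - j) + 1 := by omega
    rw [hnj]
    have e : ∀ m ∈ Finset.range ((n - j) + 1),
        (n.choose (j + m) : ℝ) * (-1) ^ (n - (j + m)) * degRise l (1 - l) (n - (j + m))
          * ((((j + m).choose j : ℝ)) * degFall l (1 - l) (j + m - j) * a j)
        = (a j * (n.choose j : ℝ)) * (((n - j).choose m : ℝ) * (-1) ^ ((n - j) - m)
          * degRise l (1 - l) ((n - j) - m) * degFall l (1 - l) m) := by
      intro m hm
      simp only [Finset.mem_range] at hm
      have h1 : n - (j + m) = (n - j) - m := by omega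
      have h2 : j + m - j = m := by omega
      have h3 := Nat.choose_mul (n := n) (show j ≤ j + m by omega)
      rw [h2] at h3
      have h4 : (n.choose (j + m) : ℝ) * ((j + m).choose j : ℝ)
          = (n.choose j : ℝ) * ((n - j).choose m : ℝ) := by exact_mod_cast congrArg Nat.cast h3
      rw [h1, h2]
      linear_combination ((-1 : ℝ) ^ ((n - j) - m) * degRise l (1 - l) ((n - j) - m)
        * degFall l (1 - l) m * a j) * h4
    rw [Finset.sum_congr rfl e, ← Finset.mul_sum, deg_orth]
  · rw [Finset.sum_eq_single_of_mem n (by simp)]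
    · simp
    · intro k hk hkn
      simp only [Finset.mem_Ico] at hk
      have : n - k ≠ 0 := by omega
      simp [this]
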